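/- Let 𝔽 be a finite field of characteristic 2, V a finite-dimensional 𝔽-vector space, Q : V → 𝔽 a quadratic form whose polar bilinear form B(v,w) = Q(v+w) − Q(v) − Q(w) is nonzero, and γ : V → 𝔽 a linear form. Then there exists v ∈ V with Tr_{𝔽/𝔽_2}(Q(v) + γ(v)) ≠ 0. -/

import Mathlib

theorem stmt_4 (𝔽 : Type*) [Field 𝔽] [Fintype 𝔽] [CharP 𝔽 2] [Algebra (ZMod 2) 𝔽]
    (V : Type*) [AddCommGroup V] [Module 𝔽 V] [FiniteDimensional 𝔽 V]
    (Q : QuadraticForm 𝔽 V)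
    (hB : ∃ v w : V, QuadraticMap.polar (⇑Q) v w ≠ 0)
    (γ : V →ₗ[𝔽] 𝔽) :
    ∃ v : V, Algebra.trace (ZMod 2) 𝔽 (Q v + γ v) ≠ 0 := by
  obtain ⟨v, w, hvw⟩ := hB
  by_contra h
  push_neg at h
  haveI : Fact (Nat.Prime 2) := ⟨Nat.prime_two⟩
  apply hvw
  have key : ∀ c : 𝔽, Algebra.trace (ZMod 2) 𝔽 (c * QuadraticMap.polar ⇑Q v w) = 0 := by
    intro c
    have h1 : c * QuadraticMap.polar ⇑Q v w = QuadraticMap.polar ⇑Q (c • v) w := by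
      rw [QuadraticMap.polar_smul_left]; simp
    have h2 : QuadraticMap.polar ⇑Q (c • v) w
        = (Q (c • v + w) + γ (c • v + w)) + (Q (c • v) + γ (c • v)) + (Q w + γ w) := by
      simp only [QuadraticMap.polar, map_add, CharTwo.sub_eq_add]
      ring_nf
      rw [mul_two, mul_two, CharTwo.add_self_eq_zero, CharTwo.add_self_eq_zero]
      ring
    rw [h1, h2, map_add, map_add, h, h, h]
    simp
  have hnd := traceForm_nondegenerate (ZMod 2) 𝔽
  apply hnd.1
  intro y
  simpa [Algebra.traceForm_apply, mul_comm] using key y
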